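/- Let X be a real Hilbert space, α > 0, A : X ≃L[ℝ] X a self-adjoint continuous linear equivalence with ⟪-A φ, φ⟫ ≥ α‖φ‖² for all φ ∈ X, and B : X →L[ℝ] X a continuous linear operator. Define the bilinear form p(Φ, Ψ) := ⟪Φ, -A⁻¹ Ψ⟫. Then p is a symmetric positive definite bilinear form on X, and for all Φ, Ψ ∈ X: |p(B(A⁻¹ Φ), Ψ)| ≤ (‖B‖ / α) · √p(Φ, Φ) · √p(Ψ, Ψ). -/

import Mathlib

open RealInnerProductSpace

theorem weighted_inner_product_bounded_operator
    {X : Type*} [NormedAddCommGroup X] [InnerProductSpace ℝ X] [CompleteSpace X]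
    (α : ℝ) (hα : 0 < α) (A : X ≃L[ℝ] X)
    (hAsa : ∀ φ ψ : X, ⟪A φ, ψ⟫ = ⟪φ, A ψ⟫)
    (hAneg : ∀ φ : X, α * ‖φ‖ ^ 2 ≤ ⟪-(A φ), φ⟫)
    (B : X →L[ℝ] X)
    (p : X → X → ℝ) (hp : ∀ Φ Ψ : X, p Φ Ψ = ⟪Φ, -(A.symm Ψ)⟫) :
    (∀ Φ Ψ : X, p Φ Ψ = p Ψ Φ) ∧
    (∀ Φ : X, Φ ≠ 0 → 0 < p Φ Φ) ∧
    (∀ Φ Ψ : X, |p (B (A.symm Φ)) Ψ| ≤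
      (‖B‖ / α) * Real.sqrt (p Φ Φ) * Real.sqrt (p Ψ Ψ)) := by
  have hsymm : ∀ x y : X, ⟪A.symm x, y⟫ = ⟪x, A.symm y⟫ := by
    intro x y
    have := hAsa (A.symm x) (A.symm y)
    simpa using this.symm
  have hkey : ∀ Φ : X, α * ‖A.symm Φ‖ ^ 2 ≤ p Φ Φ := by
    intro Φ
    have h := hAneg (A.symm Φ)
    rw [hp]
    calc α * ‖A.symm Φ‖ ^ 2 ≤ ⟪-(A (A.symm Φ)), A.symm Φ⟫ := h
      _ = ⟪Φ, -(A.symm Φ)⟫ := by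
          rw [inner_neg_left, inner_neg_right, A.apply_symm_apply, real_inner_comm (A.symm Φ)]
  have hpnn : ∀ Φ : X, 0 ≤ p Φ Φ := fun Φ =>
    le_trans (by positivity) (hkey Φ)
  have hnorm : ∀ Φ : X, ‖A.symm Φ‖ ≤ Real.sqrt (p Φ Φ) / Real.sqrt α := by
    intro Φ
    have h1 : ‖A.symm Φ‖ ^ 2 ≤ p Φ Φ / α := by
      rw [le_div_iff₀ hα]; linarith [hkey Φ]
    have h2 : ‖A.symm Φ‖ ≤ Real.sqrt (p Φ Φ / α) := by
      have := Real.sqrt_le_sqrt h1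
      rwa [Real.sqrt_sq (norm_nonneg _)] at this
    rwa [Real.sqrt_div (hpnn Φ)] at h2
  refine ⟨?_, ?_, ?_⟩
  · intro Φ Ψ
    rw [hp, hp, inner_neg_right, inner_neg_right, real_inner_comm, hsymm]
  · intro Φ hΦ
    have hφ : A.symm Φ ≠ 0 := fun h => hΦ (by simpa using congrArg A h)
    have : 0 < α * ‖A.symm Φ‖ ^ 2 := mul_pos hα (pow_pos (norm_pos_iff.mpr hφ) 2)
    linarith [hkey Φ]
  · intro Φ Ψ
    have hEq : p (B (A.symm Φ)) Ψ = ⟪B (A.symm Φ), -(A.symm Ψ)⟫ := hp _ _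
    have hC : |p (B (A.symm Φ)) Ψ| ≤ ‖B‖ * ‖A.symm Φ‖ * ‖A.symm Ψ‖ := by
      rw [hEq, inner_neg_right, abs_neg]
      calc |⟪B (A.symm Φ), A.symm Ψ⟫| ≤ ‖B (A.symm Φ)‖ * ‖A.symm Ψ‖ :=
            abs_real_inner_le_norm _ _
        _ ≤ ‖B‖ * ‖A.symm Φ‖ * ‖A.symm Ψ‖ :=
            mul_le_mul_of_nonneg_right (B.le_opNorm _) (norm_nonneg _)
    have hmul : ‖B‖ * ‖A.symm Φ‖ * ‖A.symm Ψ‖ ≤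
        ‖B‖ * (Real.sqrt (p Φ Φ) / Real.sqrt α) * (Real.sqrt (p Ψ Ψ) / Real.sqrt α) := by
      have hB : (0:ℝ) ≤ ‖B‖ := norm_nonneg _
      exact mul_le_mul (mul_le_mul_of_nonneg_left (hnorm Φ) hB) (hnorm Ψ)
        (norm_nonneg _) (by positivity)
    have hα' : Real.sqrt α * Real.sqrt α = α := Real.mul_self_sqrt hα.le
    have : ‖B‖ * (Real.sqrt (p Φ Φ) / Real.sqrt α) * (Real.sqrt (p Ψ Ψ) / Real.sqrt α)
        = (‖B‖ / α) * Real.sqrt (p Φ Φ) * Real.sqrt (p Ψ Ψ) := by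
      field_simp
      rw [Real.sq_sqrt hα.le]; ring
    linarith [hC.trans (hmul.trans_eq this)]
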